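/- arXiv:2007.09730 — 3 statements merged into one kernel-verified Lean document; each statement's English description precedes it below -/
import Mathlib

section
/- Let n ≥ 1, μ, λ ∈ ℝ, t ∈ ℝ, and let ξ ∈ ℝⁿ with ξ ≠ 0. Let A(ξ) = μ‖ξ‖²·Iₙ + (μ+λ)·ξξᵀ. Then the trace of the matrix exponential exp(−t·A(ξ)) equals (n−1)·e^{−tμ‖ξ‖²} + e^{−t(2μ+λ)‖ξ‖²}. -/
open Matrix

open NormedSpace in
/-- exp of a scalar multiple of a "projection-like" matrix `P` with `P * P = s • P`. -/
lemma exp_smul_projlike {m : Type*} [Fintype m] [DecidableEq m]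
    (P : Matrix m m ℝ) (s c : ℝ) (hs : s ≠ 0) (hPP : P * P = s • P) :
    exp (c • P) = 1 + ((Real.exp (c * s) - 1) / s) • P := by
  letI : SeminormedRing (Matrix m m ℝ) := Matrix.linftyOpSemiNormedRing
  letI : NormedRing (Matrix m m ℝ) := Matrix.linftyOpNormedRing
  letI : NormedAlgebra ℝ (Matrix m m ℝ) := Matrix.linftyOpNormedAlgebra
  have hPpow : ∀ k : ℕ, P ^ (k + 1) = s ^ k • P := by
    intro k
    induction k with
    | zero => simp
    | succ k ih =>
      rw [pow_succ, ih, smul_mul_assoc, hPP, smul_smul, pow_succ]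
  have hsum : Summable fun k : ℕ => ((Nat.factorial k : ℝ))⁻¹ • (c • P) ^ k :=
    NormedSpace.expSeries_summable' (c • P)
  have hscal : Summable fun k : ℕ => (c * s) ^ (k + 1) / Nat.factorial (k+1) / s := by
    apply Summable.div_const
    exact (summable_nat_add_iff 1).2 (Real.summable_pow_div_factorial (c * s))
  rw [NormedSpace.exp_eq_tsum ℝ]
  beta_reduce
  rw [Summable.tsum_eq_zero_add hsum]
  have hterm : ∀ k : ℕ, ((Nat.factorial (k+1) : ℝ))⁻¹ • (c • P) ^ (k + 1)
      = ((c * s) ^ (k + 1) / Nat.factorial (k+1) / s) • P := by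
    intro k
    rw [smul_pow, hPpow, smul_smul, smul_smul]
    congr 1
    field_simp
    ring
  simp only [hterm]
  rw [Summable.tsum_smul_const hscal]
  have hexp : Real.exp (c * s) = 1 + ∑' k : ℕ, (c * s) ^ (k + 1) / Nat.factorial (k+1) := by
    have h1 : Real.exp (c * s) = ∑' k : ℕ, (c * s) ^ k / Nat.factorial k := by
      rw [Real.exp_eq_exp_ℝ, NormedSpace.exp_eq_tsum_div]
    have h2 : Summable fun k : ℕ => (c * s) ^ k / Nat.factorial k :=
      Real.summable_pow_div_factorial (c * s)
    rw [h1, Summable.tsum_eq_zero_add h2]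
    simp
  have htsum : ∑' k : ℕ, (c * s) ^ (k + 1) / Nat.factorial (k+1) / s
      = (Real.exp (c * s) - 1) / s := by
    rw [tsum_div_const, hexp]
    ring
  rw [htsum]
  simp

/-- Trace of the heat semigroup symbol of the Navier–Lamé operator:
`Tr exp(-t A(ξ)) = (n-1) e^{-tμ‖ξ‖²} + e^{-t(2μ+λ)‖ξ‖²}`. -/
theorem trace_exp_neg_navier_lame_symbol (n : ℕ) (hn : 1 ≤ n)
    (μ lam t : ℝ) (ξ : Fin n → ℝ) (hξ : ξ ≠ 0)
    (A : Matrix (Fin n) (Fin n) ℝ)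
    (hA : A = Matrix.of fun j k =>
      μ * (∑ m, ξ m ^ 2) * (if j = k then 1 else 0) + (μ + lam) * ξ j * ξ k) :
    (NormedSpace.exp ((-t) • A)).trace
      = ((n : ℝ) - 1) * Real.exp (-(t * μ * ∑ m, ξ m ^ 2))
        + Real.exp (-(t * (2 * μ + lam) * ∑ m, ξ m ^ 2)) := by
  set s : ℝ := ∑ m, ξ m ^ 2 with hs_def
  obtain ⟨i, hi0⟩ := Function.ne_iff.1 hξ
  have hi : ξ i ≠ 0 := by simpa using hi0
  have hs : 0 < s := by
    apply Finset.sum_pos' (fun m _ => sq_nonneg (ξ m))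
    exact ⟨i, Finset.mem_univ i, by positivity⟩
  set P : Matrix (Fin n) (Fin n) ℝ := Matrix.of fun j k => ξ j * ξ k with hP_def
  have hPP : P * P = s • P := by
    ext j k
    simp only [Matrix.mul_apply, Matrix.smul_apply, hP_def, Matrix.of_apply, smul_eq_mul]
    calc ∑ m, ξ j * ξ m * (ξ m * ξ k)
        = ∑ m, ξ m ^ 2 * (ξ j * ξ k) := Finset.sum_congr rfl fun m _ => by ring
      _ = s * (ξ j * ξ k) := by rw [← Finset.sum_mul]
  have hdecomp : (-t) • A = (-(t * μ * s)) • (1 : Matrix (Fin n) (Fin n) ℝ)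
      + (-(t * (μ + lam))) • P := by
    ext j k
    simp only [hA, Matrix.smul_apply, Matrix.add_apply, Matrix.of_apply, Matrix.one_apply,
      hP_def, smul_eq_mul]
    by_cases h : j = k <;> simp [h] <;> ring
  have hcomm : Commute ((-(t * μ * s)) • (1 : Matrix (Fin n) (Fin n) ℝ))
      ((-(t * (μ + lam))) • P) :=
    ((Commute.one_left P).smul_left _).smul_right _
  rw [hdecomp]
  rw [Matrix.exp_add_of_commute _ _ hcomm]
  have h1 : NormedSpace.exp ((-(t * μ * s)) • (1 : Matrix (Fin n) (Fin n) ℝ))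
      = Real.exp (-(t * μ * s)) • (1 : Matrix (Fin n) (Fin n) ℝ) := by
    letI : SeminormedRing (Matrix (Fin n) (Fin n) ℝ) := Matrix.linftyOpSemiNormedRing
    letI : NormedRing (Matrix (Fin n) (Fin n) ℝ) := Matrix.linftyOpNormedRing
    letI : NormedAlgebra ℝ (Matrix (Fin n) (Fin n) ℝ) := Matrix.linftyOpNormedAlgebra
    rw [← Algebra.algebraMap_eq_smul_one]
    erw [← NormedSpace.algebraMap_exp_comm]
    rw [← Real.exp_eq_exp_ℝ, Algebra.algebraMap_eq_smul_one]
  have h2 : NormedSpace.exp ((-(t * (μ + lam))) • P)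
      = 1 + ((Real.exp ((-(t * (μ + lam))) * s) - 1) / s) • P :=
    exp_smul_projlike P s _ hs.ne' hPP
  rw [h1, h2]
  have htrP : P.trace = s := by
    simp only [Matrix.trace, Matrix.diag, hP_def, Matrix.of_apply, hs_def]
    exact Finset.sum_congr rfl fun m _ => (sq (ξ m)).symm
  rw [smul_mul_assoc, one_mul, Matrix.trace_smul, Matrix.trace_add, Matrix.trace_smul,
    Matrix.trace_one, htrP]
  have hcard : (Fintype.card (Fin n) : ℝ) = (n : ℝ) := by simp
  rw [hcard]
  have hα : (Real.exp ((-(t * (μ + lam))) * s) - 1) / s * s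
      = Real.exp ((-(t * (μ + lam))) * s) - 1 := by
    field_simp
  rw [smul_eq_mul, smul_eq_mul, hα]
  have hsplit : -(t * (2 * μ + lam) * s) = -(t * μ * s) + (-(t * (μ + lam))) * s := by ring
  rw [hsplit, Real.exp_add]
  ring
end

section
/- Let n ≥ 1 be an integer, let μ, λ ∈ ℝ satisfy μ > 0 and 2μ + λ > 0, and let ε > 0. Then the function t ↦ ∫_0^ε [ (n−1)·(4πμt)^{−n/2}·e^{−(2s)²/(4μt)} + (4π(2μ+λ)t)^{−n/2}·e^{−(2s)²/(4(2μ+λ)t)} ] ds − (1/4)·[ (n−1)·(4πμt)^{−(n−1)/2} + (4π(2μ+λ)t)^{−(n−1)/2} ] is O(t^{1−n/2}) as t → 0⁺ (with respect to the filter of positive t tending to 0). -/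
open Real MeasureTheory Filter Asymptotics


lemma BL.fun_eq (a : ℝ) : (fun s : ℝ => Real.exp (-s^2/a)) = fun s => Real.exp (-(1/a) * s^2) := by
  funext s; congr 1; ring

lemma BL.integrable (a : ℝ) (ha : 0 < a) : Integrable (fun s : ℝ => Real.exp (-s^2/a)) := by
  rw [BL.fun_eq a]; exact integrable_exp_neg_mul_sq (by positivity)

lemma BL.tail_nonneg (a ε : ℝ) : 0 ≤ ∫ s in Set.Ioi ε, Real.exp (-s^2/a) :=
  setIntegral_nonneg measurableSet_Ioi fun s _ => (Real.exp_pos _).le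

lemma BL.exp_int (c ε : ℝ) (hc : 0 < c) :
    ∫ s in Set.Ioi ε, Real.exp (-(s * c)) = c⁻¹ * Real.exp (-(ε * c)) := by
  have h := integral_comp_mul_right_Ioi (fun x => Real.exp (-x)) ε hc
  simp only [smul_eq_mul] at h
  rw [h, integral_exp_neg_Ioi]

lemma BL.tail_le (a ε : ℝ) (ha : 0 < a) (hε : 0 < ε) :
    ∫ s in Set.Ioi ε, Real.exp (-s^2/a) ≤ a / ε := by
  have hmono : ∫ s in Set.Ioi ε, Real.exp (-s^2/a) ≤ ∫ s in Set.Ioi ε, Real.exp (-(s * (ε/a))) := by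
    apply setIntegral_mono_on ((BL.integrable a ha).integrableOn)
    · have h := exp_neg_integrableOn_Ioi ε (show (0:ℝ) < ε/a by positivity)
      simpa [mul_comm] using h
    · exact measurableSet_Ioi
    · intro s hs
      apply Real.exp_le_exp.2
      have h1 : s * ε ≤ s^2 := by nlinarith [hs.out]
      rw [div_eq_mul_inv, div_eq_mul_inv]
      nlinarith [mul_le_mul_of_nonneg_right h1 (inv_pos.2 ha).le]
  calc ∫ s in Set.Ioi ε, Real.exp (-s^2/a) ≤ (ε/a)⁻¹ * Real.exp (-(ε * (ε/a))) := by
        rw [← BL.exp_int (ε/a) ε (by positivity)]; exact hmono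
    _ ≤ a / ε := by
        rw [inv_div]
        exact mul_le_of_le_one_right (by positivity)
          (Real.exp_le_one_iff.2 (neg_nonpos.2 (by positivity)))

lemma BL.split (a ε : ℝ) (ha : 0 < a) (hε : 0 < ε) :
    ∫ s in Set.Ioc 0 ε, Real.exp (-s^2/a)
      = Real.sqrt (π * a) / 2 - ∫ s in Set.Ioi ε, Real.exp (-s^2/a) := by
  have hunion : Set.Ioc (0:ℝ) ε ∪ Set.Ioi ε = Set.Ioi 0 := Set.Ioc_union_Ioi_eq_Ioi hε.le
  have hint := BL.integrable a ha
  have hdisj : Disjoint (Set.Ioc (0:ℝ) ε) (Set.Ioi ε) := Set.Ioc_disjoint_Ioi le_rfl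
  have hsum : (∫ s in Set.Ioc (0:ℝ) ε, Real.exp (-s^2/a))
      + ∫ s in Set.Ioi ε, Real.exp (-s^2/a) = ∫ s in Set.Ioi (0:ℝ), Real.exp (-s^2/a) := by
    rw [← hunion]
    exact (setIntegral_union hdisj measurableSet_Ioi hint.integrableOn hint.integrableOn).symm
  have hg : ∫ s in Set.Ioi (0:ℝ), Real.exp (-s^2/a) = Real.sqrt (π * a) / 2 := by
    rw [BL.fun_eq a, integral_gaussian_Ioi]
    congr 2
    rw [div_div_eq_mul_div, div_one]
  linarith [hsum, hg]

lemma BL.main_id (c t : ℝ) (hc : 0 < c) (ht : 0 < t) (n : ℕ) :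
    (4*π*c*t) ^ (-(n:ℝ)/2) * (Real.sqrt (π * (c*t)) / 2)
      = (1/4) * (4*π*c*t) ^ (-((n:ℝ)-1)/2) := by
  have hb : (0:ℝ) < 4*π*c*t := by positivity
  have hsq : Real.sqrt (π * (c*t)) = (4*π*c*t) ^ (1/2:ℝ) / 2 := by
    rw [show π * (c*t) = (4*π*c*t)/4 by ring, Real.sqrt_div hb.le,
      show Real.sqrt 4 = 2 by
        rw [show (4:ℝ) = 2^2 by norm_num, Real.sqrt_sq (by norm_num)],
      Real.sqrt_eq_rpow]
  rw [hsq, show (4*π*c*t) ^ (-(n:ℝ)/2) * ((4*π*c*t)^(1/2:ℝ)/2/2)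
      = (1/4) * ((4*π*c*t) ^ (-(n:ℝ)/2) * (4*π*c*t)^(1/2:ℝ)) by ring,
    ← Real.rpow_add hb]
  congr 1
  ring

/-- Boundary-layer contribution to the heat trace (per unit boundary area):
`∫₀^ε [ (n-1)(4πμt)^{-n/2} e^{-(2s)²/(4μt)} + (4π(2μ+λ)t)^{-n/2} e^{-(2s)²/(4(2μ+λ)t)} ] ds
  = (1/4)[ (n-1)(4πμt)^{-(n-1)/2} + (4π(2μ+λ)t)^{-(n-1)/2} ] + O(t^{1-n/2})` as `t → 0⁺`. -/
theorem boundary_layer_contribution_navier_lame (n : ℕ) (hn : 1 ≤ n)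
    (μ lam : ℝ) (hμ : 0 < μ) (hlam : 0 < 2 * μ + lam) (ε : ℝ) (hε : 0 < ε) :
    (fun t : ℝ =>
        (∫ s in Set.Ioc (0 : ℝ) ε,
            (((n : ℝ) - 1) * (4 * π * μ * t) ^ (-(n : ℝ) / 2)
                * Real.exp (-(2 * s) ^ 2 / (4 * μ * t))
              + (4 * π * (2 * μ + lam) * t) ^ (-(n : ℝ) / 2)
                * Real.exp (-(2 * s) ^ 2 / (4 * (2 * μ + lam) * t))))
          - (1 / 4) * (((n : ℝ) - 1) * (4 * π * μ * t) ^ (-((n : ℝ) - 1) / 2)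
              + (4 * π * (2 * μ + lam) * t) ^ (-((n : ℝ) - 1) / 2)))
      =O[nhdsWithin 0 (Set.Ioi 0)] fun t : ℝ => t ^ (1 - (n : ℝ) / 2) := by
  rw [isBigO_iff]
  refine ⟨((n:ℝ)-1) * (4*π*μ)^(-(n:ℝ)/2) * (μ/ε)
      + (4*π*(2*μ+lam))^(-(n:ℝ)/2) * ((2*μ+lam)/ε), ?_⟩
  filter_upwards [self_mem_nhdsWithin] with t ht
  simp only [Set.mem_Ioi] at ht
  have hμt : 0 < μ * t := mul_pos hμ ht
  have hνt : 0 < (2*μ+lam) * t := mul_pos hlam ht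
  have hn1 : (0:ℝ) ≤ (n:ℝ) - 1 := by
    have : (1:ℝ) ≤ (n:ℝ) := by exact_mod_cast hn
    linarith
  set K₁ : ℝ := (4*π*μ*t) ^ (-(n:ℝ)/2) with hK₁def
  set K₂ : ℝ := (4*π*(2*μ+lam)*t) ^ (-(n:ℝ)/2) with hK₂def
  set T₁ : ℝ := ∫ s in Set.Ioi ε, Real.exp (-s^2/(μ*t)) with hT₁def
  set T₂ : ℝ := ∫ s in Set.Ioi ε, Real.exp (-s^2/((2*μ+lam)*t)) with hT₂def
  have e1 : ∀ s : ℝ, Real.exp (-(2*s)^2/(4*μ*t)) = Real.exp (-s^2/(μ*t)) := by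
    intro s; congr 1; field_simp; ring
  have e2 : ∀ s : ℝ, Real.exp (-(2*s)^2/(4*(2*μ+lam)*t)) = Real.exp (-s^2/((2*μ+lam)*t)) := by
    intro s; congr 1; field_simp; ring
  have hint : (∫ s in Set.Ioc (0:ℝ) ε,
        (((n:ℝ)-1) * K₁ * Real.exp (-(2*s)^2/(4*μ*t))
          + K₂ * Real.exp (-(2*s)^2/(4*(2*μ+lam)*t))))
      = ((n:ℝ)-1) * K₁ * (∫ s in Set.Ioc (0:ℝ) ε, Real.exp (-s^2/(μ*t)))
        + K₂ * (∫ s in Set.Ioc (0:ℝ) ε, Real.exp (-s^2/((2*μ+lam)*t))) := by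
    simp only [e1, e2]
    rw [integral_add (((BL.integrable _ hμt).const_mul _).integrableOn)
        (((BL.integrable _ hνt).const_mul _).integrableOn),
      integral_const_mul, integral_const_mul]
  rw [hint, BL.split (μ*t) ε hμt hε, BL.split ((2*μ+lam)*t) ε hνt hε]
  have m1 := BL.main_id μ t hμ ht n
  have m2 := BL.main_id (2*μ+lam) t hlam ht n
  have key : ((n:ℝ)-1) * K₁ * (Real.sqrt (π * (μ*t))/2 - T₁)
        + K₂ * (Real.sqrt (π * ((2*μ+lam)*t))/2 - T₂)
      - (1/4) * (((n:ℝ)-1) * (4*π*μ*t) ^ (-((n:ℝ)-1)/2)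
          + (4*π*(2*μ+lam)*t) ^ (-((n:ℝ)-1)/2))
      = -(((n:ℝ)-1) * K₁ * T₁ + K₂ * T₂) := by
    linear_combination ((n:ℝ)-1) * m1 + m2
  rw [key]
  have hK₁nn : 0 ≤ K₁ := Real.rpow_nonneg (by positivity) _
  have hK₂nn : 0 ≤ K₂ := Real.rpow_nonneg (by positivity) _
  have hT₁nn : 0 ≤ T₁ := BL.tail_nonneg _ _
  have hT₂nn : 0 ≤ T₂ := BL.tail_nonneg _ _
  have hXnn : 0 ≤ ((n:ℝ)-1) * K₁ * T₁ + K₂ * T₂ := by positivity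
  rw [Real.norm_eq_abs, abs_neg, abs_of_nonneg hXnn, Real.norm_eq_abs,
    abs_of_nonneg (Real.rpow_nonneg ht.le _)]
  have ht1 : t ^ (-(n:ℝ)/2) * t = t ^ (1 - (n:ℝ)/2) := by
    calc t ^ (-(n:ℝ)/2) * t = t ^ (-(n:ℝ)/2) * t ^ (1:ℝ) := by rw [Real.rpow_one]
      _ = t ^ (-(n:ℝ)/2 + 1) := (Real.rpow_add ht _ _).symm
      _ = t ^ (1 - (n:ℝ)/2) := by ring_nf
  have hK₁eq : K₁ = (4*π*μ)^(-(n:ℝ)/2) * t^(-(n:ℝ)/2) :=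
    Real.mul_rpow (by positivity) ht.le
  have hK₂eq : K₂ = (4*π*(2*μ+lam))^(-(n:ℝ)/2) * t^(-(n:ℝ)/2) :=
    Real.mul_rpow (by positivity) ht.le
  have b1 : ((n:ℝ)-1) * K₁ * T₁
      ≤ ((n:ℝ)-1) * (4*π*μ)^(-(n:ℝ)/2) * (μ/ε) * t^(1-(n:ℝ)/2) := by
    have step1 : ((n:ℝ)-1) * K₁ * T₁ ≤ ((n:ℝ)-1) * K₁ * (μ*t/ε) :=
      mul_le_mul_of_nonneg_left (BL.tail_le _ _ hμt hε) (mul_nonneg hn1 hK₁nn)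
    have step2 : ((n:ℝ)-1) * K₁ * (μ*t/ε)
        = ((n:ℝ)-1) * (4*π*μ)^(-(n:ℝ)/2) * (μ/ε) * t^(1-(n:ℝ)/2) := by
      rw [hK₁eq, ← ht1]; ring
    linarith
  have b2 : K₂ * T₂
      ≤ (4*π*(2*μ+lam))^(-(n:ℝ)/2) * ((2*μ+lam)/ε) * t^(1-(n:ℝ)/2) := by
    have step1 : K₂ * T₂ ≤ K₂ * ((2*μ+lam)*t/ε) :=
      mul_le_mul_of_nonneg_left (BL.tail_le _ _ hνt hε) hK₂nn
    have step2 : K₂ * ((2*μ+lam)*t/ε)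
        = (4*π*(2*μ+lam))^(-(n:ℝ)/2) * ((2*μ+lam)/ε) * t^(1-(n:ℝ)/2) := by
      rw [hK₂eq, ← ht1]; ring
    linarith
  nlinarith [b1, b2]
end

section
/- Let n ≥ 1 be an integer, let μ, λ ∈ ℝ satisfy μ > 0 and 2μ + λ > 0, and let t > 0. For ξ ∈ ℝⁿ let A(ξ) = μ‖ξ‖²·Iₙ + (μ+λ)·ξξᵀ. Then (2π)^{−n} ∫_{ℝⁿ} trace( exp(−t·A(ξ)) ) dξ = (n−1)/(4πμt)^{n/2} + 1/(4π(2μ+λ)t)^{n/2}, where exp denotes the matrix exponential. -/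
open Real MeasureTheory Matrix

section aux
variable {n : ℕ}

lemma exp_smul_idem (Q : Matrix (Fin n) (Fin n) ℝ) (hQ : Q * Q = Q) (r : ℝ) :
    NormedSpace.exp (r • Q) = 1 + (Real.exp r - 1) • Q := by
  have hpow : ∀ k : ℕ, (r • Q) ^ k = if k = 0 then 1 else (r ^ k) • Q := by
    intro k
    induction k with
    | zero => simp
    | succ m ih =>
      rcases Nat.eq_zero_or_pos m with hm | hm
      · subst hm; simp [pow_succ]
      · have hm' : m ≠ 0 := hm.ne'
        rw [pow_succ, ih]
        simp only [hm', if_neg, Nat.succ_ne_zero, if_false]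
        rw [smul_mul_smul_comm, hQ, pow_succ]
  have hsum : Summable (fun k : ℕ => r ^ k / (k.factorial : ℝ)) :=
    Real.summable_pow_div_factorial r
  have hsum1 : Summable (fun k : ℕ => r ^ (k + 1) / ((k + 1).factorial : ℝ)) :=
    (summable_nat_add_iff 1).2 hsum
  have hexp : Real.exp r = ∑' k : ℕ, r ^ k / (k.factorial : ℝ) := by
    rw [Real.exp_eq_exp_ℝ, NormedSpace.exp_eq_tsum_div]
  have hshift : (∑' k : ℕ, r ^ (k + 1) / ((k + 1).factorial : ℝ)) = Real.exp r - 1 := by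
    have h0 := hsum.tsum_eq_zero_add
    rw [hexp]
    simp only [pow_zero, Nat.factorial_zero, Nat.cast_one, div_one] at h0
    rw [h0]; ring
  rw [NormedSpace.exp_eq_tsum ℝ]
  have hf : ∀ k : ℕ, ((k.factorial : ℝ)⁻¹) • (r • Q) ^ k
      = if k = 0 then (1 : Matrix (Fin n) (Fin n) ℝ) else (r ^ k / (k.factorial : ℝ)) • Q := by
    intro k
    rw [hpow k]
    rcases eq_or_ne k 0 with hk | hk
    · simp [hk]
    · simp [hk, smul_smul, div_eq_inv_mul]
  simp_rw [hf]
  have hS : Summable (fun k : ℕ => if k = 0 then (1 : Matrix (Fin n) (Fin n) ℝ)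
      else (r ^ k / (k.factorial : ℝ)) • Q) := by
    rw [← summable_nat_add_iff 1]
    simpa using hsum1.smul_const Q
  rw [hS.tsum_eq_zero_add]
  simp only [if_pos rfl, Nat.succ_ne_zero, if_neg, reduceIte]
  rw [hsum1.tsum_smul_const, hshift]

lemma trace_exp_symbol (μ lam t : ℝ)
    (ξ : EuclideanSpace ℝ (Fin n)) :
    (NormedSpace.exp ((-t) • (Matrix.of fun j k : Fin n =>
        μ * ‖ξ‖ ^ 2 * (if j = k then 1 else 0) + (μ + lam) * ξ j * ξ k))).trace
      = ((n : ℝ) - 1) * Real.exp (-(t * μ) * ‖ξ‖ ^ 2)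
        + Real.exp (-(t * (2 * μ + lam)) * ‖ξ‖ ^ 2) := by
  set s : ℝ := ‖ξ‖ ^ 2 with hs_def
  have hs_sum : s = ∑ i, ξ i ^ 2 := by
    rw [hs_def, EuclideanSpace.norm_eq, Real.sq_sqrt
      (Finset.sum_nonneg fun i _ => by positivity)]
    simp [sq_abs]
  by_cases hξ : ξ = 0
  · subst hξ
    have hz : ((-t) • (Matrix.of fun j k : Fin n =>
        μ * ‖(0 : EuclideanSpace ℝ (Fin n))‖ ^ 2 * (if j = k then 1 else 0)
          + (μ + lam) * (0 : EuclideanSpace ℝ (Fin n)) j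
            * (0 : EuclideanSpace ℝ (Fin n)) k)) = 0 := by
      ext j k; simp
    rw [hz, NormedSpace.exp_zero, Matrix.trace_one]
    have hs0 : s = 0 := by simp [hs_def]
    rw [hs0]
    simp
  · have hs_pos : 0 < s := by
      rw [hs_def]; exact pow_pos (norm_pos_iff.2 hξ) 2
    have hs_ne : s ≠ 0 := hs_pos.ne'
    set P : Matrix (Fin n) (Fin n) ℝ := Matrix.of fun j k => ξ j * ξ k with hP_def
    have hPP : P * P = s • P := by
      ext j k
      simp only [hP_def, Matrix.mul_apply, Matrix.smul_apply, Matrix.of_apply, smul_eq_mul]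
      rw [hs_sum, Finset.sum_mul]
      congr 1; ext l; ring
    set Q : Matrix (Fin n) (Fin n) ℝ := s⁻¹ • P with hQ_def
    have hQQ : Q * Q = Q := by
      rw [hQ_def, smul_mul_smul_comm, hPP, smul_smul, mul_assoc, inv_mul_cancel₀ hs_ne,
        mul_one]
    have hPQ : P = s • Q := by rw [hQ_def, smul_smul, mul_inv_cancel₀ hs_ne, one_smul]
    set a : ℝ := -(t * μ * s) with ha_def
    set c : ℝ := -(t * (μ + lam)) with hc_def
    have hM : ((-t) • (Matrix.of fun j k : Fin n =>
        μ * ‖ξ‖ ^ 2 * (if j = k then 1 else 0) + (μ + lam) * ξ j * ξ k))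
        = a • (1 : Matrix (Fin n) (Fin n) ℝ) + (c * s) • Q := by
      rw [← smul_smul, ← hPQ]
      ext j k
      simp only [Matrix.add_apply, Matrix.smul_apply, Matrix.of_apply, Matrix.one_apply,
        smul_eq_mul, hP_def, ha_def, hc_def, ← hs_def]
      split_ifs <;> ring
    have hcomm : Commute (a • (1 : Matrix (Fin n) (Fin n) ℝ)) ((c * s) • Q) :=
      Commute.smul_left (Commute.smul_right (Commute.one_left Q) _) _
    rw [hM, Matrix.exp_add_of_commute _ _ hcomm]
    have h1 : NormedSpace.exp (a • (1 : Matrix (Fin n) (Fin n) ℝ))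
        = Real.exp a • (1 : Matrix (Fin n) (Fin n) ℝ) := by
      rw [Matrix.smul_one_eq_diagonal, Matrix.exp_diagonal, Matrix.smul_one_eq_diagonal]
      congr 1
      ext i
      rw [Pi.exp_def, Real.exp_eq_exp_ℝ]
    rw [h1, exp_smul_idem Q hQQ (c * s)]
    rw [smul_mul_assoc, one_mul, smul_add, smul_smul]
    rw [Matrix.trace_add, Matrix.trace_smul, Matrix.trace_smul, Matrix.trace_one]
    have htrQ : Q.trace = 1 := by
      have htrP : P.trace = s := by
        rw [Matrix.trace, hs_sum]
        congr 1; ext i; simp [hP_def, Matrix.diag, sq]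
      rw [hQ_def, Matrix.trace_smul, htrP, smul_eq_mul, inv_mul_cancel₀ hs_ne]
    rw [htrQ]
    have h2 : a = -(t * μ) * s := by rw [ha_def]; ring
    have h3 : a + c * s = -(t * (2 * μ + lam)) * s := by rw [ha_def, hc_def]; ring
    simp only [smul_eq_mul, mul_one]
    have h4 : rexp a * (rexp (c * s) - 1) = rexp (a + c * s) - rexp a := by
      rw [Real.exp_add]; ring
    rw [h4, h3, h2, Fintype.card_fin]
    push_cast
    ring
end aux

lemma gauss_combine (y : ℝ) (hy : 0 < y) (n : ℕ) :
    (2 * π) ^ (-(n : ℝ)) * (π / y) ^ ((n : ℝ) / 2) = 1 / (4 * π * y) ^ ((n : ℝ) / 2) := by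
  have hπ := Real.pi_pos
  have h1 : (2 * π) ^ (-(n : ℝ)) = ((4 * π ^ 2)⁻¹ : ℝ) ^ ((n : ℝ) / 2) := by
    rw [Real.inv_rpow (by positivity), ← Real.rpow_neg (by positivity)]
    rw [show (4 * π ^ 2 : ℝ) = (2 * π) ^ (2 : ℕ) by ring, ← Real.rpow_natCast (2 * π) 2,
      ← Real.rpow_mul (by positivity)]
    congr 1
    push_cast
    ring
  rw [h1, ← Real.mul_rpow (by positivity) (by positivity), one_div,
    ← Real.inv_rpow (by positivity)]
  congr 1
  field_simp

lemma integrable_gauss {n : ℕ} {b : ℝ} (hb : 0 < b) :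
    Integrable (fun ξ : EuclideanSpace ℝ (Fin n) => Real.exp (-b * ‖ξ‖ ^ 2)) := by
  have h := (GaussianFourier.integrable_cexp_neg_mul_sq_norm_add (V := EuclideanSpace ℝ (Fin n))
    (b := (b : ℂ)) (by simpa using hb) 0 0).norm
  refine h.congr ?_
  filter_upwards with v
  simp only [zero_mul, add_zero, Complex.norm_exp]
  rw [show (-(b : ℂ) * ((‖v‖ : ℝ) : ℂ) ^ 2) = ((-b * ‖v‖ ^ 2 : ℝ) : ℂ) by push_cast; ring,
    Complex.ofReal_re]

/-- The interior heat-trace density of the Euclidean Navier–Lamé operator: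
`(2π)⁻ⁿ ∫ Tr exp(-t A(ξ)) dξ = (n-1)/(4πμt)^{n/2} + 1/(4π(2μ+λ)t)^{n/2}`,
where `A(ξ) = μ‖ξ‖² Iₙ + (μ+λ) ξξᵀ`. -/
theorem integral_trace_exp_navier_lame_symbol (n : ℕ) (hn : 1 ≤ n)
    (μ lam : ℝ) (hμ : 0 < μ) (hlam : 0 < 2 * μ + lam) (t : ℝ) (ht : 0 < t)
    (A : EuclideanSpace ℝ (Fin n) → Matrix (Fin n) (Fin n) ℝ)
    (hA : ∀ ξ, A ξ = Matrix.of fun j k =>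
      μ * ‖ξ‖ ^ 2 * (if j = k then 1 else 0) + (μ + lam) * ξ j * ξ k) :
    (2 * π) ^ (-(n : ℝ))
        * ∫ ξ : EuclideanSpace ℝ (Fin n), (NormedSpace.exp ((-t) • A ξ)).trace
      = ((n : ℝ) - 1) / (4 * π * μ * t) ^ ((n : ℝ) / 2)
        + 1 / (4 * π * (2 * μ + lam) * t) ^ ((n : ℝ) / 2) := by
  have hb1 : (0:ℝ) < t * μ := by positivity
  have hb2 : (0:ℝ) < t * (2 * μ + lam) := mul_pos ht hlam
  have hrw : (fun ξ : EuclideanSpace ℝ (Fin n) => (NormedSpace.exp ((-t) • A ξ)).trace)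
      = fun ξ => ((n : ℝ) - 1) * Real.exp (-(t * μ) * ‖ξ‖ ^ 2)
        + Real.exp (-(t * (2 * μ + lam)) * ‖ξ‖ ^ 2) := by
    funext ξ
    rw [hA ξ]
    exact trace_exp_symbol μ lam t ξ
  rw [hrw, integral_add ((integrable_gauss hb1).const_mul _) (integrable_gauss hb2),
    integral_const_mul, GaussianFourier.integral_rexp_neg_mul_sq_norm hb1,
    GaussianFourier.integral_rexp_neg_mul_sq_norm hb2, finrank_euclideanSpace_fin]
  have k1 := gauss_combine (t * μ) hb1 n
  have k2 := gauss_combine (t * (2 * μ + lam)) hb2 n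
  rw [show (4 * π * μ * t : ℝ) = 4 * π * (t * μ) by ring,
    show (4 * π * (2 * μ + lam) * t : ℝ) = 4 * π * (t * (2 * μ + lam)) by ring,
  ]
  linear_combination ((n : ℝ) - 1) * k1 + k2
end
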